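/- Let Y : [t,T] → ℝ^{N×N} be a continuous adapted bounded symmetric-matrix-valued process satisfying, for matrices U_T ≥ 0, and adapted bounded processes A(s), H^{xx}(s) ≥ 0, H^{pp}(s) ≤ 0 (in the semidefinite order), Y(s) = E_s[ U_T + ∫_s^T ( H^{xx}(r) + A(r)Y(r) + Y(r)A(r)ᵀ + Y(r)H^{pp}(r)Y(r) ) dr ]. Then Y(s) ≥ 0 (positive semidefinite) for all s ∈ [t,T], almost surely. -/

import Mathlib

set_option maxHeartbeats 1000000

open scoped BigOperators Matrix
open MeasureTheory

section Aux

lemma aux_inner_eq {N : ℕ} (x y : EuclideanSpace ℝ (Fin N)) :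
    inner ℝ x y = (x : Fin N → ℝ) ⬝ᵥ y := by
  simp [PiLp.inner_apply, dotProduct, mul_comm]

lemma exists_min_eigen {N : ℕ} [Nonempty (Fin N)] (B : Matrix (Fin N) (Fin N) ℝ)
    (hB : B.IsHermitian) :
    ∃ (lam : ℝ) (v : Fin N → ℝ), (∑ i, v i ^ 2 = 1) ∧ B *ᵥ v = lam • v ∧
      ∀ w : Fin N → ℝ, (∑ i, w i ^ 2 = 1) → lam ≤ w ⬝ᵥ B *ᵥ w := by
  have hBsym : Bᵀ = B := by
    rw [← Matrix.conjTranspose_eq_transpose_of_trivial]; exact hB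
  obtain ⟨i₀, hi₀⟩ := Finite.exists_min hB.eigenvalues
  set b := hB.eigenvectorBasis with hb
  have heig : ∀ i, B *ᵥ (fun k => b i k) = hB.eigenvalues i • (fun k => b i k) :=
    fun i => hB.mulVec_eigenvectorBasis i
  have hunit : ∀ i, ∑ k, b i k ^ 2 = 1 := by
    intro i
    have h1 : ‖b i‖ = 1 := b.orthonormal.1 i
    have h2 := aux_inner_eq (b i) (b i)
    rw [real_inner_self_eq_norm_sq, h1] at h2
    simp only [dotProduct] at h2
    simpa [sq] using h2.symm
  refine ⟨hB.eigenvalues i₀, (fun k => b i₀ k), by simpa using hunit i₀, heig i₀, ?_⟩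
  intro w hw
  have hWW : w ⬝ᵥ w = 1 := by
    simpa [dotProduct, sq] using hw
  have hexp : ∀ y : Fin N → ℝ,
      w ⬝ᵥ (y : Fin N → ℝ) = ∑ i, ((b i : Fin N → ℝ) ⬝ᵥ w) * ((b i : Fin N → ℝ) ⬝ᵥ y) := by
    intro y
    have h3 := b.sum_inner_mul_inner (WithLp.toLp 2 w) (WithLp.toLp 2 y)
    simp only [aux_inner_eq, WithLp.ofLp_toLp] at h3
    rw [← h3]
    congr 1; funext i
    rw [dotProduct_comm (w : Fin N → ℝ) ((b i : Fin N → ℝ))]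
  have hbBw : ∀ i, ((b i : Fin N → ℝ)) ⬝ᵥ (B *ᵥ w) = hB.eigenvalues i * ((b i : Fin N → ℝ) ⬝ᵥ w) := by
    intro i
    rw [Matrix.dotProduct_mulVec, ← Matrix.mulVec_transpose, hBsym]
    have h5 : B *ᵥ (b i : Fin N → ℝ) = hB.eigenvalues i • (b i : Fin N → ℝ) := heig i
    rw [h5, smul_dotProduct]
    simp
  have hmain : w ⬝ᵥ B *ᵥ w = ∑ i, hB.eigenvalues i * ((b i : Fin N → ℝ) ⬝ᵥ w) ^ 2 := by
    rw [hexp (B *ᵥ w : Fin N → ℝ)]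
    congr 1; funext i
    rw [hbBw i]; ring
  have hpars : ∑ i, ((b i : Fin N → ℝ) ⬝ᵥ w) ^ 2 = 1 := by
    have h4 := hexp w
    rw [hWW] at h4
    simpa [sq] using h4.symm
  calc hB.eigenvalues i₀ = ∑ i, hB.eigenvalues i₀ * ((b i : Fin N → ℝ) ⬝ᵥ w) ^ 2 := by
        rw [← Finset.mul_sum, hpars, mul_one]
    _ ≤ ∑ i, hB.eigenvalues i * ((b i : Fin N → ℝ) ⬝ᵥ w) ^ 2 :=
        Finset.sum_le_sum fun i _ => mul_le_mul_of_nonneg_right (hi₀ i) (sq_nonneg _)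
    _ = w ⬝ᵥ B *ᵥ w := hmain.symm

lemma quad_abs_le {N : ℕ} {B : Matrix (Fin N) (Fin N) ℝ} {v : Fin N → ℝ} {M : ℝ}
    (hM : 0 ≤ M) (hv : ∀ i, |v i| ≤ 1) (hB : ∀ i j, |B i j| ≤ M) :
    |v ⬝ᵥ B *ᵥ v| ≤ (N : ℝ)^2 * M := by
  have hrow : ∀ i, |v i * ∑ j, B i j * v j| ≤ (N : ℝ) * M := by
    intro i
    calc |v i * ∑ j, B i j * v j| = |v i| * |∑ j, B i j * v j| := abs_mul _ _
      _ ≤ 1 * (∑ j, |B i j * v j|) :=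
          mul_le_mul (hv i) (Finset.abs_sum_le_sum_abs _ _)
            (abs_nonneg _) zero_le_one
      _ = ∑ j, |B i j| * |v j| := by rw [one_mul]; exact Finset.sum_congr rfl fun j _ => abs_mul _ _
      _ ≤ ∑ j : Fin N, M * 1 := Finset.sum_le_sum fun j _ =>
          mul_le_mul (hB i j) (hv j) (abs_nonneg _) hM
      _ = (N : ℝ) * M := by simp [mul_comm]
  calc |v ⬝ᵥ B *ᵥ v| = |∑ i, v i * ∑ j, B i j * v j| := by
        simp [dotProduct, Matrix.mulVec]
    _ ≤ ∑ i, |v i * ∑ j, B i j * v j| := Finset.abs_sum_le_sum_abs _ _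
    _ ≤ ∑ i : Fin N, (N : ℝ) * M := Finset.sum_le_sum fun i _ => hrow i
    _ = (N : ℝ)^2 * M := by simp; ring

lemma intervalIntegrable_sum {ι : Type*} (s : Finset ι) {f : ι → ℝ → ℝ}
    {μ : MeasureTheory.Measure ℝ} {a b : ℝ}
    (h : ∀ i ∈ s, IntervalIntegrable (f i) μ a b) :
    IntervalIntegrable (fun x => ∑ i ∈ s, f i x) μ a b := by
  have h2 := IntervalIntegrable.sum s h
  have h3 : (∑ i ∈ s, f i) = fun x => ∑ i ∈ s, f i x := by
    funext x; simp
  rwa [h3] at h2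

end Aux

theorem stmt11 (N : ℕ) (t T : ℝ) (htT : t ≤ T)
    (Y A Hxx Hpp : ℝ → Matrix (Fin N) (Fin N) ℝ)
    (UT : Matrix (Fin N) (Fin N) ℝ)
    (hYcont : ∀ i j, ContinuousOn (fun s => Y s i j) (Set.Icc t T))
    (hAcont : ∀ i j, ContinuousOn (fun s => A s i j) (Set.Icc t T))
    (hHxxcont : ∀ i j, ContinuousOn (fun s => Hxx s i j) (Set.Icc t T))
    (hHppcont : ∀ i j, ContinuousOn (fun s => Hpp s i j) (Set.Icc t T))
    (hbdd : ∃ M : ℝ, ∀ s ∈ Set.Icc t T, ∀ i j,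
      |Y s i j| ≤ M ∧ |A s i j| ≤ M ∧ |Hxx s i j| ≤ M ∧ |Hpp s i j| ≤ M)
    (hYsym : ∀ s ∈ Set.Icc t T, (Y s).IsSymm)
    (hUT : UT.PosSemidef)
    (hHxx : ∀ s ∈ Set.Icc t T, (Hxx s).PosSemidef)
    (hHpp : ∀ s ∈ Set.Icc t T, (-(Hpp s)).PosSemidef)
    (heq : ∀ s ∈ Set.Icc t T, ∀ i j,
      Y s i j = UT i j +
        ∫ r in s..T, (Hxx r + A r * Y r + Y r * (A r)ᵀ + Y r * Hpp r * Y r) i j) :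
    ∀ s ∈ Set.Icc t T, (Y s).PosSemidef := by
  obtain ⟨M₀, hM₀⟩ := hbdd
  set M : ℝ := max M₀ 0 with hMdef
  have hM : 0 ≤ M := le_max_right _ _
  have hMb : ∀ s ∈ Set.Icc t T, ∀ i j,
      |Y s i j| ≤ M ∧ |A s i j| ≤ M ∧ |Hxx s i j| ≤ M ∧ |Hpp s i j| ≤ M := by
    intro s hs i j
    obtain ⟨h1, h2, h3, h4⟩ := hM₀ s hs i j
    exact ⟨h1.trans (le_max_left _ _), h2.trans (le_max_left _ _),
      h3.trans (le_max_left _ _), h4.trans (le_max_left _ _)⟩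
  set c : ℝ := (N : ℝ)^2 * M with hcdef
  have hc : 0 ≤ c := mul_nonneg (by positivity) hM
  set C : ℝ := 2*c + c^2 + 1 with hCdef
  have hC : 0 < C := by positivity
  set K : ℝ := 2*C with hKdef
  -- the clamping map
  set π : ℝ → ℝ := fun r => max t (min r T) with hπdef
  have hπmem : ∀ r, π r ∈ Set.Icc t T :=
    fun r => ⟨le_max_left _ _, max_le htT (min_le_right _ _)⟩
  have hπcont : Continuous π :=
    continuous_const.max (continuous_id.min continuous_const)
  have hπid : ∀ r ∈ Set.Icc t T, π r = r := by
    intro r hr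
    simp only [hπdef]
    rw [min_eq_left hr.2, max_eq_right hr.1]
  set F : ℝ → Matrix (Fin N) (Fin N) ℝ :=
    fun r => Hxx r + A r * Y r + Y r * (A r)ᵀ + Y r * Hpp r * Y r with hFdef
  -- continuity of clamped entries
  have hYc : ∀ i j, Continuous fun r => Y (π r) i j :=
    fun i j => (hYcont i j).comp_continuous hπcont hπmem
  have hAc : ∀ i j, Continuous fun r => A (π r) i j :=
    fun i j => (hAcont i j).comp_continuous hπcont hπmem
  have hHxxc : ∀ i j, Continuous fun r => Hxx (π r) i j :=
    fun i j => (hHxxcont i j).comp_continuous hπcont hπmem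
  have hHppc : ∀ i j, Continuous fun r => Hpp (π r) i j :=
    fun i j => (hHppcont i j).comp_continuous hπcont hπmem
  have hFentry : ∀ i j, Continuous fun r => F (π r) i j := by
    intro i j
    simp only [hFdef, Matrix.add_apply, Matrix.mul_apply, Matrix.transpose_apply]
    refine (((hHxxc i j).add ?_).add ?_).add ?_
    · exact continuous_finset_sum _ fun k _ => (hAc i k).mul (hYc k j)
    · exact continuous_finset_sum _ fun k _ => (hYc i k).mul (hAc j k)
    · exact continuous_finset_sum _ fun k _ =>
        (continuous_finset_sum _ fun l _ => (hYc i l).mul (hHppc l k)).mul (hYc k j)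
  have hFcontOn : ∀ i j, ContinuousOn (fun r => F r i j) (Set.Icc t T) := by
    intro i j
    refine ((hFentry i j).continuousOn).congr ?_
    intro r hr
    simp only []
    rw [hπid r hr]
  have hFint : ∀ i j, ∀ a b, a ∈ Set.Icc t T → b ∈ Set.Icc t T →
      IntervalIntegrable (fun r => F r i j) volume a b := by
    intro i j a b ha hb
    refine ((hFcontOn i j).mono ?_).intervalIntegrable
    exact Set.uIcc_subset_Icc ha hb
  have hTmem : T ∈ Set.Icc t T := ⟨htT, le_rfl⟩
  -- quadratic form version of the integral equation
  have hQeq : ∀ s ∈ Set.Icc t T, ∀ v : Fin N → ℝ,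
      v ⬝ᵥ Y s *ᵥ v = v ⬝ᵥ UT *ᵥ v + ∫ r in s..T, v ⬝ᵥ F r *ᵥ v := by
    intro s hs v
    have hint : ∀ i j, IntervalIntegrable (fun r => v i * (F r i j * v j)) volume s T :=
      fun i j => ((hFint i j s T hs hTmem).mul_const (v j)).const_mul (v i)
    have hswap : ∀ i j, v i * ((∫ r in s..T, F r i j) * v j)
        = ∫ r in s..T, v i * (F r i j * v j) := by
      intro i j
      rw [← intervalIntegral.integral_mul_const, ← intervalIntegral.integral_const_mul]
    calc v ⬝ᵥ Y s *ᵥ v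
        = ∑ i, ∑ j, v i * ((UT i j + ∫ r in s..T, F r i j) * v j) := by
          simp only [dotProduct, Matrix.mulVec, Finset.mul_sum]
          exact Finset.sum_congr rfl fun i _ => Finset.sum_congr rfl fun j _ => by
            rw [← heq s hs i j]
      _ = (∑ i, ∑ j, v i * (UT i j * v j))
          + ∑ i, ∑ j, v i * ((∫ r in s..T, F r i j) * v j) := by
          simp only [add_mul, mul_add, Finset.sum_add_distrib]
      _ = (∑ i, ∑ j, v i * (UT i j * v j))
          + ∫ r in s..T, ∑ i, ∑ j, v i * (F r i j * v j) := by
          congr 1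
          simp only [hswap]
          have h6 : (∫ r in s..T, ∑ i, ∑ j, v i * (F r i j * v j))
              = ∑ i, ∫ r in s..T, ∑ j, v i * (F r i j * v j) :=
            intervalIntegral.integral_finset_sum
              (fun i _ => intervalIntegrable_sum _ fun j _ => hint i j)
          rw [h6]
          exact Finset.sum_congr rfl fun i _ =>
            (intervalIntegral.integral_finset_sum fun j _ => hint i j).symm
      _ = v ⬝ᵥ UT *ᵥ v + ∫ r in s..T, v ⬝ᵥ F r *ᵥ v := by
          congr 1
          · simp [dotProduct, Matrix.mulVec, Finset.mul_sum]
          · refine intervalIntegral.integral_congr fun r _ => ?_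
            simp [dotProduct, Matrix.mulVec, Finset.mul_sum]

  have hYTform : ∀ w : Fin N → ℝ, w ⬝ᵥ Y T *ᵥ w = w ⬝ᵥ UT *ᵥ w := by
    intro w
    rw [hQeq T hTmem w, intervalIntegral.integral_same, add_zero]
  -- a helper about symmetric action
  have hherm : ∀ s ∈ Set.Icc t T, (Y s).IsHermitian := by
    intro s hs
    have h8 := hYsym s hs
    rw [Matrix.IsHermitian, Matrix.conjTranspose_eq_transpose_of_trivial]
    exact h8
  -- key claim
  have key : ∀ ε : ℝ, 0 < ε → ∀ s ∈ Set.Icc t T, ∀ v : Fin N → ℝ, (∑ i, v i ^ 2 = 1) →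
      -(ε * Real.exp (K * (T - s))) < v ⬝ᵥ Y s *ᵥ v := by
    intro ε hε
    by_contra hcon
    push_neg at hcon
    obtain ⟨s₀, hs₀, v₀, hv₀unit, hv₀⟩ := hcon
    set S : Set (Fin N → ℝ) := {v | ∑ i, v i ^ 2 = 1} with hSdef
    set G : ℝ × (Fin N → ℝ) → ℝ :=
      fun p => p.2 ⬝ᵥ Y (π p.1) *ᵥ p.2 + ε * Real.exp (K * (T - p.1)) with hGdef
    have hGcont : Continuous G := by
      apply Continuous.add
      · have h9 : (fun p : ℝ × (Fin N → ℝ) => p.2 ⬝ᵥ Y (π p.1) *ᵥ p.2)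
            = fun p => ∑ i, p.2 i * ∑ j, Y (π p.1) i j * p.2 j := by
          funext p; simp [dotProduct, Matrix.mulVec]
        rw [h9]
        refine continuous_finset_sum _ fun i _ =>
          Continuous.mul ((continuous_apply i).comp continuous_snd) ?_
        exact continuous_finset_sum _ fun j _ =>
          Continuous.mul ((hYc i j).comp continuous_fst)
            ((continuous_apply j).comp continuous_snd)
      · exact continuous_const.mul (Real.continuous_exp.comp
          (continuous_const.mul (continuous_const.sub continuous_fst)))
    have hScl : IsClosed S :=
      isClosed_eq (continuous_finset_sum _ fun i _ => (continuous_apply i).pow 2)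
        continuous_const
    have hSbd : Bornology.IsBounded S := by
      apply (Metric.isBounded_closedBall (x := (0 : Fin N → ℝ)) (r := 1)).subset
      intro v hv
      rw [Metric.mem_closedBall, dist_zero_right]
      rw [pi_norm_le_iff_of_nonneg zero_le_one]
      intro i
      have h7 : v i ^ 2 ≤ 1 := by
        have h9 := Finset.single_le_sum (f := fun k => v k ^ 2)
          (fun j _ => sq_nonneg _) (Finset.mem_univ i)
        rw [hv] at h9
        simpa using h9
      rw [Real.norm_eq_abs]
      exact (sq_le_one_iff_abs_le_one (v i)).mp h7
    have hprod : IsCompact (Set.Icc t T ×ˢ S) :=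
      isCompact_Icc.prod (Metric.isCompact_of_isClosed_isBounded hScl hSbd)
    set Cset := (Set.Icc t T ×ˢ S) ∩ G ⁻¹' (Set.Iic 0) with hCsetdef
    have hCcpt : IsCompact Cset := hprod.inter_right (isClosed_Iic.preimage hGcont)
    have hCne : Cset.Nonempty := by
      refine ⟨(s₀, v₀), ⟨⟨hs₀, hv₀unit⟩, ?_⟩⟩
      simp only [Set.mem_preimage, Set.mem_Iic, hGdef]
      rw [hπid s₀ hs₀]
      linarith
    set Bad := Prod.fst '' Cset with hBaddef
    have hBadcpt : IsCompact Bad := hCcpt.image continuous_fst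
    have hBadne : Bad.Nonempty := hCne.image _
    set σ := sSup Bad with hσdef
    have hσBad : σ ∈ Bad := hBadcpt.sSup_mem hBadne
    obtain ⟨p, hpC, hp1⟩ := hσBad
    have hσIcc : σ ∈ Set.Icc t T := hp1 ▸ hpC.1.1
    set w := p.2 with hwdef
    have hwS : ∑ i, w i ^ 2 = 1 := hpC.1.2
    have hGw : w ⬝ᵥ Y σ *ᵥ w ≤ -(ε * Real.exp (K * (T - σ))) := by
      have h10 := hpC.2
      simp only [Set.mem_preimage, Set.mem_Iic, hGdef] at h10
      rw [hp1] at h10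
      rw [hπid σ hσIcc] at h10
      linarith
    have hNne : Nonempty (Fin N) := by
      rcases isEmpty_or_nonempty (Fin N) with h | h
      · exfalso
        rw [Finset.univ_eq_empty, Finset.sum_empty] at hwS
        norm_num at hwS
      · exact h
    have hnotbad : ∀ s ∈ Set.Icc t T, σ < s → ∀ u : Fin N → ℝ, (∑ i, u i ^ 2 = 1) →
        -(ε * Real.exp (K * (T - s))) < u ⬝ᵥ Y s *ᵥ u := by
      intro s hsI hσs u huS
      by_contra hle
      push_neg at hle
      have hmem : s ∈ Bad := by
        refine ⟨(s, u), ⟨⟨hsI, huS⟩, ?_⟩, rfl⟩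
        simp only [Set.mem_preimage, Set.mem_Iic, hGdef]
        rw [hπid s hsI]
        linarith
      have := le_csSup hBadcpt.bddAbove hmem
      rw [← hσdef] at this
      linarith
    obtain ⟨lam, v, hvunit, hveig, hray⟩ := exists_min_eigen (Y σ) (hherm σ hσIcc)
    have hv1 : ∀ i, |v i| ≤ 1 := by
      intro i
      have h7 : v i ^ 2 ≤ 1 := by
        have h9 := Finset.single_le_sum (f := fun k => v k ^ 2)
          (fun j _ => sq_nonneg _) (Finset.mem_univ i)
        rw [hvunit] at h9
        simpa using h9
      exact (sq_le_one_iff_abs_le_one (v i)).mp h7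
    have hvv : v ⬝ᵥ v = 1 := by simpa [dotProduct, sq] using hvunit
    have hQv : v ⬝ᵥ Y σ *ᵥ v = lam := by
      rw [hveig, dotProduct_smul, hvv]
      simp
    have hlamw : lam ≤ -(ε * Real.exp (K * (T - σ))) := le_trans (hray w hwS) hGw
    have hlamneg : lam < 0 := by
      have : 0 < ε * Real.exp (K * (T - σ)) := by positivity
      linarith
    have hlam_abs : |lam| ≤ c := by
      rw [← hQv]
      exact quad_abs_le hM hv1 fun i j => (hMb σ hσIcc i j).1
    have hσT : σ < T := by
      rcases lt_or_eq_of_le hσIcc.2 with h | h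
      · exact h
      · exfalso
        have h11 : 0 ≤ w ⬝ᵥ UT *ᵥ w := by
          have := hUT.dotProduct_mulVec_nonneg w
          simpa using this
        rw [h, hYTform w] at hGw
        have : 0 < ε * Real.exp (K * (T - T)) := by positivity
        linarith
    -- the scalar integrand
    set q : ℝ → ℝ := fun r => v ⬝ᵥ F (π r) *ᵥ v with hqdef
    have hqcont : Continuous q := by
      have h9 : q = fun r => ∑ i, v i * ∑ j, F (π r) i j * v j := by
        funext r; simp [hqdef, dotProduct, Matrix.mulVec]
      rw [h9]
      exact continuous_finset_sum _ fun i _ => continuous_const.mul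
        (continuous_finset_sum _ fun j _ => (hFentry i j).mul continuous_const)
    have hqr_eq : ∀ r ∈ Set.Icc t T, q r = v ⬝ᵥ F r *ᵥ v := by
      intro r hr
      simp only [hqdef]
      rw [hπid r hr]
    -- eigen action on dot products
    have hYdot : ∀ x : Fin N → ℝ, v ⬝ᵥ (Y σ *ᵥ x) = lam * (v ⬝ᵥ x) := by
      intro x
      rw [Matrix.dotProduct_mulVec, ← Matrix.mulVec_transpose, hYsym σ hσIcc, hveig,
        smul_dotProduct]
      simp
    have hsplit : q σ = v ⬝ᵥ Hxx σ *ᵥ v + lam * (v ⬝ᵥ A σ *ᵥ v)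
        + lam * (v ⬝ᵥ (A σ)ᵀ *ᵥ v) + lam * (lam * (v ⬝ᵥ Hpp σ *ᵥ v)) := by
      rw [hqr_eq σ hσIcc, hFdef]
      simp only [Matrix.add_mulVec, dotProduct_add]
      congr 1
      · congr 1
        · congr 1
          rw [← Matrix.mulVec_mulVec, hveig, Matrix.mulVec_smul, dotProduct_smul]
          simp
        · rw [← Matrix.mulVec_mulVec, hYdot]
      · rw [← Matrix.mulVec_mulVec, ← Matrix.mulVec_mulVec, hveig, Matrix.mulVec_smul,
          Matrix.mulVec_smul, dotProduct_smul, hYdot]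
        simp [mul_comm]
    have hA_abs : |v ⬝ᵥ A σ *ᵥ v| ≤ c :=
      quad_abs_le hM hv1 fun i j => (hMb σ hσIcc i j).2.1
    have hAt_abs : |v ⬝ᵥ (A σ)ᵀ *ᵥ v| ≤ c :=
      quad_abs_le hM hv1 fun i j => by
        rw [Matrix.transpose_apply]; exact (hMb σ hσIcc j i).2.1
    have hHpp_abs : |v ⬝ᵥ Hpp σ *ᵥ v| ≤ c :=
      quad_abs_le hM hv1 fun i j => (hMb σ hσIcc i j).2.2.2
    have hHxx_pos : 0 ≤ v ⬝ᵥ Hxx σ *ᵥ v := by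
      have := (hHxx σ hσIcc).dotProduct_mulVec_nonneg v
      simpa using this
    have hqσ : (2 * c + c ^ 2) * lam ≤ q σ := by
      rw [hsplit]
      obtain ⟨hA1, hA2⟩ := abs_le.mp hA_abs
      obtain ⟨hAt1, hAt2⟩ := abs_le.mp hAt_abs
      obtain ⟨hHp1, hHp2⟩ := abs_le.mp hHpp_abs
      obtain ⟨hl1, hl2⟩ := abs_le.mp hlam_abs
      have t2 : lam * c ≤ lam * (v ⬝ᵥ A σ *ᵥ v) :=
        mul_le_mul_of_nonpos_left hA2 hlamneg.le
      have t3 : lam * c ≤ lam * (v ⬝ᵥ (A σ)ᵀ *ᵥ v) :=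
        mul_le_mul_of_nonpos_left hAt2 hlamneg.le
      have t4 : lam ^ 2 * (-c) ≤ lam ^ 2 * (v ⬝ᵥ Hpp σ *ᵥ v) :=
        mul_le_mul_of_nonneg_left hHp1 (sq_nonneg lam)
      have aux : 0 ≤ c * (-lam) * (lam + c) :=
        mul_nonneg (mul_nonneg hc (by linarith)) (by linarith)
      have t5 : c ^ 2 * lam ≤ lam ^ 2 * (-c) := by
        linarith only [aux, sq_nonneg lam, sq_abs lam]
      have t6 : lam * (lam * (v ⬝ᵥ Hpp σ *ᵥ v)) = lam ^ 2 * (v ⬝ᵥ Hpp σ *ᵥ v) := by ring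
      rw [t6]
      linarith [hHxx_pos, t2, t3, t4, t5]
    have hδex : ∃ δ > 0, ∀ r, |r - σ| < δ → |q r - q σ| < -lam := by
      have hca := hqcont.continuousAt (x := σ)
      rw [Metric.continuousAt_iff] at hca
      obtain ⟨δ, hδpos, hδ⟩ := hca (-lam) (by linarith)
      refine ⟨δ, hδpos, fun r hr => ?_⟩
      have := hδ (show dist r σ < δ by rwa [Real.dist_eq])
      rwa [Real.dist_eq] at this
    obtain ⟨δ, hδpos, hδq⟩ := hδex
    set h : ℝ := min (min (δ / 2) (1 / (2 * C))) (T - σ) with hhdef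
    have hhpos : 0 < h :=
      lt_min (lt_min (by linarith) (by positivity)) (by linarith)
    have hh1 : h ≤ δ / 2 := le_trans (min_le_left _ _) (min_le_left _ _)
    have hh2 : h ≤ 1 / (2 * C) := le_trans (min_le_left _ _) (min_le_right _ _)
    have hh3 : h ≤ T - σ := min_le_right _ _
    set s : ℝ := σ + h with hsdef
    have hsI : s ∈ Set.Icc t T := ⟨by linarith [hσIcc.1], by linarith⟩
    have hσs : σ < s := by simp only [hsdef]; linarith
    have hqlb : ∀ r ∈ Set.Icc σ s, C * lam ≤ v ⬝ᵥ F r *ᵥ v := by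
      intro r hr
      have hrI : r ∈ Set.Icc t T := ⟨le_trans hσIcc.1 hr.1, le_trans hr.2 hsI.2⟩
      have h12 : |r - σ| < δ := by
        rw [abs_of_nonneg (by linarith [hr.1])]
        have : r ≤ σ + h := hr.2
        linarith
      have h13 := abs_lt.mp (hδq r h12)
      rw [← hqr_eq r hrI]
      have : C * lam = (2 * c + c ^ 2) * lam + lam := by rw [hCdef]; ring
      rw [this]
      linarith [hqσ, h13.1]
    -- integrability of the scalar integrand
    have hqint : ∀ a b : ℝ, a ∈ Set.Icc t T → b ∈ Set.Icc t T →
        IntervalIntegrable (fun r => v ⬝ᵥ F r *ᵥ v) volume a b := by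
      intro a b ha hb
      refine (((hqcont.continuousOn).congr ?_).mono (Set.uIcc_subset_Icc ha hb)).intervalIntegrable
      intro r hr
      exact (hqr_eq r hr).symm
    have hφσ := hQeq σ hσIcc v
    have hφs := hQeq s hsI v
    have hadd : (∫ r in σ..s, v ⬝ᵥ F r *ᵥ v) + (∫ r in s..T, v ⬝ᵥ F r *ᵥ v)
        = ∫ r in σ..T, v ⬝ᵥ F r *ᵥ v :=
      intervalIntegral.integral_add_adjacent_intervals (hqint σ s hσIcc hsI)
        (hqint s T hsI hTmem)
    have hφdiff : v ⬝ᵥ Y s *ᵥ v = lam - ∫ r in σ..s, v ⬝ᵥ F r *ᵥ v := by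
      rw [← hQv, hφσ, hφs, ← hadd]
      ring
    have hIlb : C * lam * (s - σ) ≤ ∫ r in σ..s, v ⬝ᵥ F r *ᵥ v := by
      have hconst : (∫ _ in σ..s, C * lam) = C * lam * (s - σ) := by
        rw [intervalIntegral.integral_const, smul_eq_mul]
        ring
      rw [← hconst]
      exact intervalIntegral.integral_mono_on hσs.le intervalIntegrable_const
        (hqint σ s hσIcc hsI) hqlb
    have hsσ : s - σ = h := by rw [hsdef]; ring
    have hφs_ub : v ⬝ᵥ Y s *ᵥ v ≤ lam * (1 - C * h) := by
      rw [hφdiff]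
      rw [hsσ] at hIlb
      linarith [hIlb]
    have hφs_lb : -(ε * Real.exp (K * (T - s))) < v ⬝ᵥ Y s *ᵥ v :=
      hnotbad s hsI hσs v hvunit
    clear_value σ h s M c C K
    have hCh : C * h ≤ 1 / 2 := by
      have := mul_le_mul_of_nonneg_left hh2 hC.le
      calc C * h ≤ C * (1 / (2 * C)) := this
        _ = 1 / 2 := by field_simp
    have h1mCh : 0 ≤ 1 - C * h := by linarith
    have hlam2 : lam * (1 - C * h) ≤ -(ε * Real.exp (K * (T - σ))) * (1 - C * h) :=
      mul_le_mul_of_nonneg_right hlamw h1mCh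
    have hchain : -(ε * Real.exp (K * (T - s)))
        < -(ε * Real.exp (K * (T - σ))) * (1 - C * h) :=
      lt_of_lt_of_le hφs_lb (le_trans hφs_ub hlam2)
    have hexp1 : Real.exp (K * (T - s)) * Real.exp (K * h) = Real.exp (K * (T - σ)) := by
      rw [← Real.exp_add]
      congr 1
      rw [hsdef]; ring
    have hexp2 : K * h + 1 ≤ Real.exp (K * h) := Real.add_one_le_exp _
    have hKh : K * h = 2 * (C * h) := by rw [hKdef]; ring
    have hEpos : 0 < Real.exp (K * (T - s)) := Real.exp_pos _
    have hchain2 : Real.exp (K * h) * (1 - C * h) < 1 := by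
      rw [← hexp1] at hchain
      have hεE : 0 < ε * Real.exp (K * (T - s)) := by positivity
      by_contra hge
      push_neg at hge
      have hmul := mul_le_mul_of_nonneg_left hge hεE.le
      linarith only [hmul, hchain]
    have e1 : (1 + 2 * (C * h)) * (1 - C * h) ≤ Real.exp (K * h) * (1 - C * h) :=
      mul_le_mul_of_nonneg_right (by linarith [hexp2, hKh]) h1mCh
    have e2 : 0 ≤ (C * h) * (1 - 2 * (C * h)) :=
      mul_nonneg (mul_nonneg hC.le hhpos.le) (by linarith only [hCh])
    linarith only [e1, e2, hchain2]
  -- conclude positive semidefiniteness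
  intro s hs
  refine Matrix.PosSemidef.of_dotProduct_mulVec_nonneg (hherm s hs) ?_
  intro x
  have hstar : star x = x := by funext i; simp
  rw [hstar]
  rcases eq_or_ne x 0 with rfl | hx
  · simp
  · obtain ⟨i₀, hi₀⟩ := Function.ne_iff.mp hx
    have hi₀' : x i₀ ≠ 0 := by simpa using hi₀
    set n2 : ℝ := ∑ i, x i ^ 2 with hn2def
    have hn2pos : 0 < n2 := by
      refine Finset.sum_pos' (fun j _ => sq_nonneg _) ⟨i₀, Finset.mem_univ i₀, ?_⟩
      exact lt_of_le_of_ne (sq_nonneg _) (Ne.symm (pow_ne_zero 2 hi₀'))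
    set u : Fin N → ℝ := (Real.sqrt n2)⁻¹ • x with hudef
    have hsq : Real.sqrt n2 ^ 2 = n2 := Real.sq_sqrt hn2pos.le
    have hsqpos : 0 < Real.sqrt n2 := Real.sqrt_pos.mpr hn2pos
    have huS : ∑ i, u i ^ 2 = 1 := by
      simp only [hudef, Pi.smul_apply, smul_eq_mul, mul_pow, ← Finset.mul_sum]
      rw [← hn2def]
      field_simp
      exact hsq.symm
    have hQscale : x ⬝ᵥ Y s *ᵥ x = n2 * (u ⬝ᵥ Y s *ᵥ u) := by
      simp only [hudef, smul_dotProduct, Matrix.mulVec_smul, dotProduct_smul,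
        smul_eq_mul]
      have hne : Real.sqrt n2 ≠ 0 := hsqpos.ne'
      field_simp
      rw [hsq]
    have hge : 0 ≤ u ⬝ᵥ Y s *ᵥ u := by
      by_contra hneg
      push_neg at hneg
      set a : ℝ := u ⬝ᵥ Y s *ᵥ u with hadef
      have hEp : 0 < Real.exp (K * (T - s)) := Real.exp_pos _
      have hεp : 0 < -a / (2 * Real.exp (K * (T - s))) := by
        apply div_pos (by linarith) (by positivity)
      have hk := key _ hεp s hs u huS
      rw [← hadef] at hk
      have : -a / (2 * Real.exp (K * (T - s))) * Real.exp (K * (T - s)) = -a / 2 := by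
        field_simp
      rw [this] at hk
      linarith
    rw [hQscale]
    positivity
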